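/- Let k ≥ 1 and let P_{3k+1} be the path on 3k+1 vertices. Then every minimum dominating set (γ-set) D of P_{3k+1} satisfies 2k ≤ C_D(P_{3k+1}) ≤ 2k+2, where C_D denotes the domination cover number of D. -/

import Mathlib

open Finset

variable {α β : Type*}

/-- `D` is a dominating set of `G`: every vertex outside `D` has a neighbor in `D`. -/
def IsDomSet (G : SimpleGraph α) (D : Finset α) : Prop :=
  ∀ v ∉ D, ∃ u ∈ D, G.Adj u v

/-- The domination number `γ(G)`: minimum cardinality of a dominating set. -/
noncomputable def domNum (G : SimpleGraph α) : ℕ :=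
  sInf {n | ∃ D : Finset α, IsDomSet G D ∧ D.card = n}

/-- The degree of vertex `v` in `G`. -/
noncomputable def vdeg (G : SimpleGraph α) (v : α) : ℕ :=
  Nat.card (G.neighborSet v)

/-- The (domination) cover number of a set of vertices `A`: the sum of degrees. -/
noncomputable def coverNum (G : SimpleGraph α) (A : Finset α) : ℕ :=
  ∑ v ∈ A, vdeg G v

/-- `D` is a minimum dominating set (γ-set) of `G`. -/
def IsGammaSet (G : SimpleGraph α) (D : Finset α) : Prop :=
  IsDomSet G D ∧ D.card = domNum G


open scoped Classical in
lemma vdeg_eq (n : ℕ) (v : Fin n) :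
    vdeg (SimpleGraph.pathGraph n) v
      = (univ.filter fun u => (SimpleGraph.pathGraph n).Adj v u).card := by
  rw [vdeg, Nat.card_coe_set_eq, Set.ncard_eq_toFinset_card']
  congr 1
  ext u
  simp [SimpleGraph.neighborSet]
  exact Set.mem_toFinset

open scoped Classical in
lemma filter_adj_subset (n : ℕ) (v : Fin n) :
    (univ.filter fun u => (SimpleGraph.pathGraph n).Adj v u) ⊆
      {⟨v.val - 1, Nat.lt_of_le_of_lt (Nat.sub_le _ _) v.isLt⟩,
       ⟨min (v.val + 1) (n - 1), by have := v.isLt; omega⟩} := by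
  intro u hu
  simp only [mem_filter, mem_univ, true_and, SimpleGraph.pathGraph_adj] at hu
  have h1 := u.isLt
  have h2 := v.isLt
  simp only [mem_insert, mem_singleton, Fin.ext_iff, Fin.val_mk]
  omega

open scoped Classical in
lemma filter_adj_card_le (n : ℕ) (v : Fin n) :
    (univ.filter fun u => (SimpleGraph.pathGraph n).Adj v u).card ≤ 2 :=
  le_trans (card_le_card (filter_adj_subset n v)) (le_trans (card_insert_le _ _) (by simp))

open scoped Classical in
lemma two_le_filter_adj (n : ℕ) (v : Fin n) (h0 : 0 < v.val) (h1 : v.val + 1 < n) :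
    2 ≤ (univ.filter fun u => (SimpleGraph.pathGraph n).Adj v u).card := by
  have hsub : ({⟨v.val - 1, by omega⟩, ⟨v.val + 1, h1⟩} : Finset (Fin n)) ⊆
      (univ.filter fun u => (SimpleGraph.pathGraph n).Adj v u) := by
    intro u hu
    simp only [mem_insert, mem_singleton] at hu
    simp only [mem_filter, mem_univ, true_and, SimpleGraph.pathGraph_adj]
    rcases hu with rfl | rfl
    · right; simp; omega
    · left; simp
  have := card_le_card hsub
  rwa [card_insert_of_notMem (by simp only [mem_singleton, Fin.ext_iff, Fin.val_mk]; omega), card_singleton] at this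

open scoped Classical in
lemma one_le_filter_adj (n : ℕ) (hn : 2 ≤ n) (v : Fin n) :
    1 ≤ (univ.filter fun u => (SimpleGraph.pathGraph n).Adj v u).card := by
  rw [Nat.one_le_iff_ne_zero, ← Nat.pos_iff_ne_zero, card_pos]
  rcases Nat.eq_zero_or_pos v.val with h0 | h0
  · exact ⟨⟨1, by omega⟩, by simp [SimpleGraph.pathGraph_adj]; omega⟩
  · exact ⟨⟨v.val - 1, by omega⟩, by simp [SimpleGraph.pathGraph_adj]; omega⟩


open scoped Classical in
lemma dom_lower (n : ℕ) (D : Finset (Fin n)) (hD : IsDomSet (SimpleGraph.pathGraph n) D) :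
    n ≤ 3 * D.card := by
  have hsub : (univ : Finset (Fin n)) ⊆
      D.biUnion (fun d => insert d (univ.filter fun u => (SimpleGraph.pathGraph n).Adj d u)) := by
    intro v _
    rw [mem_biUnion]
    by_cases hv : v ∈ D
    · exact ⟨v, hv, mem_insert_self _ _⟩
    · obtain ⟨u, hu, hadj⟩ := hD v hv
      exact ⟨u, hu, mem_insert_of_mem (by simp [hadj])⟩
  calc n = (univ : Finset (Fin n)).card := by simp
    _ ≤ _ := card_le_card hsub
    _ ≤ ∑ d ∈ D, (insert d (univ.filter fun u => (SimpleGraph.pathGraph n).Adj d u)).card :=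
        card_biUnion_le
    _ ≤ ∑ d ∈ D, 3 := by
        refine sum_le_sum fun d _ => ?_
        exact le_trans (card_insert_le _ _) (by have := filter_adj_card_le n d; omega)
    _ = 3 * D.card := by rw [sum_const, smul_eq_mul, mul_comm]

lemma exists_dom (k : ℕ) : ∃ E : Finset (Fin (3 * k + 1)),
    IsDomSet (SimpleGraph.pathGraph (3 * k + 1)) E ∧ E.card = k + 1 := by
  refine ⟨(univ : Finset (Fin (k + 1))).image
      (fun i => (⟨3 * i.val, by have := i.isLt; omega⟩ : Fin (3 * k + 1))), ?_, ?_⟩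
  · intro v hv
    have hvlt := v.isLt
    have hmem : ∀ (m : ℕ) (hm : m % 3 = 0) (hlt : m < 3 * k + 1),
        (⟨m, hlt⟩ : Fin (3 * k + 1)) ∈ (univ : Finset (Fin (k + 1))).image
          (fun i => (⟨3 * i.val, by have := i.isLt; omega⟩ : Fin (3 * k + 1))) := by
      intro m hm hlt
      simp only [mem_image, mem_univ, true_and]
      exact ⟨⟨m / 3, by omega⟩, by simp [Fin.ext_iff]; omega⟩
    have hv3 : v.val % 3 ≠ 0 := by
      intro h
      exact hv (by simpa using hmem v.val h hvlt)
    have h3 : v.val % 3 = 1 ∨ v.val % 3 = 2 := by omega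
    rcases h3 with h | h
    · refine ⟨⟨v.val - 1, by omega⟩, hmem _ (by omega) (by omega), ?_⟩
      rw [SimpleGraph.pathGraph_adj]; left; simp; omega
    · have hlt : v.val < 3 * k := by omega
      refine ⟨⟨v.val + 1, by omega⟩, hmem _ (by omega) (by omega), ?_⟩
      rw [SimpleGraph.pathGraph_adj]; right; simp
  · rw [card_image_of_injective _ (fun i j hij => by
        have := Fin.mk.injEq .. ▸ hij
        exact Fin.ext (by omega)), card_univ, Fintype.card_fin]

/-- Every minimum dominating set `D` of the path `P_{3k+1}` (`k ≥ 1`) satisfies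
`2k ≤ C_D(P_{3k+1}) ≤ 2k + 2`. -/
theorem gammaSet_pathGraph_three_mul_add_one_coverNum (k : ℕ) (hk : 1 ≤ k)
    (D : Finset (Fin (3 * k + 1)))
    (hdom : IsDomSet (SimpleGraph.pathGraph (3 * k + 1)) D)
    (hcard : D.card = domNum (SimpleGraph.pathGraph (3 * k + 1))) :
    2 * k ≤ coverNum (SimpleGraph.pathGraph (3 * k + 1)) D ∧
      coverNum (SimpleGraph.pathGraph (3 * k + 1)) D ≤ 2 * k + 2 := by

  obtain ⟨E, hE, hEcard⟩ := exists_dom k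
  have hub : domNum (SimpleGraph.pathGraph (3 * k + 1)) ≤ k + 1 :=
    Nat.sInf_le ⟨E, hE, hEcard⟩
  have hlb := dom_lower (3 * k + 1) D hdom
  have hDcard : D.card = k + 1 := by omega
  constructor
  · -- lower bound
    have key : ∀ v ∈ D, 2 ≤ vdeg (SimpleGraph.pathGraph (3 * k + 1)) v +
        ((if v.val = 0 then 1 else 0) + (if v.val = 3 * k then 1 else 0)) := by
      intro v _
      rw [vdeg_eq]
      have h1 := one_le_filter_adj (3 * k + 1) (by omega) v
      by_cases hc : v.val ≠ 0 ∧ v.val ≠ 3 * k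
      · have h2 := two_le_filter_adj (3 * k + 1) v (by omega)
          (by have := v.isLt; omega)
        split_ifs <;> omega
      · push_neg at hc
        split_ifs <;> omega
    have hsum := sum_le_sum key
    rw [sum_const, smul_eq_mul, sum_add_distrib, sum_add_distrib] at hsum
    have w1 : ∑ v ∈ D, (if v.val = 0 then 1 else 0) ≤ 1 := by
      calc ∑ v ∈ D, (if v.val = 0 then 1 else 0)
          = (D.filter fun v => v.val = 0).card := by
            exact (Finset.card_filter _ _).symm
        _ ≤ 1 := card_le_one.mpr fun a ha b hb => by
            simp only [mem_filter] at ha hb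
            exact Fin.ext (by omega)
    have w2 : ∑ v ∈ D, (if v.val = 3 * k then 1 else 0) ≤ 1 := by
      calc ∑ v ∈ D, (if v.val = 3 * k then 1 else 0)
          = (D.filter fun v => v.val = 3 * k).card := by
            exact (Finset.card_filter _ _).symm
        _ ≤ 1 := card_le_one.mpr fun a ha b hb => by
            simp only [mem_filter] at ha hb
            exact Fin.ext (by omega)
    have : coverNum (SimpleGraph.pathGraph (3 * k + 1)) D
        = ∑ v ∈ D, vdeg (SimpleGraph.pathGraph (3 * k + 1)) v := rfl
    omega
  · -- upper bound
    calc coverNum (SimpleGraph.pathGraph (3 * k + 1)) D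
        ≤ ∑ _v ∈ D, 2 := sum_le_sum fun v _ => by
          rw [vdeg_eq]; exact filter_adj_card_le _ v
      _ = 2 * (k + 1) := by rw [sum_const, smul_eq_mul, hDcard, mul_comm]
      _ ≤ 2 * k + 2 := by omega
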